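/- Let n be a positive integer, let T be a uniformly random alternating n×n matrix over F_2, and let v_1, …, v_m ∈ F_2^n span a subspace of dimension d. Then the probability that T v_i = 0 for all i ≤ m equals 2^{−nd + d(d+1)/2}. -/

import Mathlib

/-- An alternating matrix over `𝔽₂`: symmetric with zero diagonal. -/
def IsAlt2 {n : ℕ} (T : Matrix (Fin n) (Fin n) (ZMod 2)) : Prop :=
  T.IsSymm ∧ ∀ i, T i i = 0

namespace Alt2Aux

open Matrix Finset Module

/-! ### Quadratic form of an alternating matrix vanishes -/

lemma quad_zero {ι : Type*} [Fintype ι] (T : Matrix ι ι (ZMod 2)) (hs : T.IsSymm)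
    (hdg : ∀ i, T i i = 0) (x : ι → ZMod 2) : x ⬝ᵥ T.mulVec x = 0 := by
  have h : x ⬝ᵥ T.mulVec x = ∑ p : ι × ι, x p.1 * T p.1 p.2 * x p.2 := by
    rw [Fintype.sum_prod_type]
    simp [dotProduct, Matrix.mulVec, Finset.mul_sum, mul_assoc]
  rw [h]
  refine Finset.sum_ninvolution Prod.swap ?_ ?_ (by simp) (by simp)
  · intro p
    have h1 : T p.2 p.1 = T p.1 p.2 := hs.apply p.1 p.2
    simp only [Prod.fst_swap, Prod.snd_swap, h1]
    rw [show x p.2 * T p.1 p.2 * x p.1 = x p.1 * T p.1 p.2 * x p.2 by ring]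
    exact CharTwo.add_self_eq_zero _
  · rintro ⟨i, j⟩ hne h
    apply hne
    have h2 : j = i := congrArg Prod.fst h
    subst h2
    simp [hdg]

/-! ### Alternating matrices as functions on ordered pairs -/

def altFunEquiv (N : ℕ) :
    {T : Matrix (Fin N) (Fin N) (ZMod 2) // T.IsSymm ∧ ∀ i, T i i = 0} ≃
      ({p : Fin N × Fin N // p.1 < p.2} → ZMod 2) where
  toFun T p := T.1 p.1.1 p.1.2
  invFun f := ⟨Matrix.of fun i j =>
      if h : i < j then f ⟨(i, j), h⟩ else if h' : j < i then f ⟨(j, i), h'⟩ else 0, by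
    constructor
    · ext i j
      rcases lt_trichotomy i j with h | h | h
      · simp [Matrix.transpose_apply, h, h.asymm]
      · subst h; simp
      · simp [Matrix.transpose_apply, h, h.asymm]
    · intro i; simp⟩
  left_inv := by
    rintro ⟨T, hs, hdg⟩
    ext i j
    rcases lt_trichotomy i j with h | h | h
    · simp [h]
    · subst h; simp [hdg]
    · simp [h, h.asymm, hs.apply i j]
  right_inv := by
    intro f
    ext ⟨⟨i, j⟩, h⟩
    simp [h]

def pairSigmaEquiv (N : ℕ) : {p : Fin N × Fin N // p.1 < p.2} ≃ (Σ j : Fin N, Fin j.1) where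
  toFun p := ⟨p.1.2, ⟨p.1.1.1, p.2⟩⟩
  invFun q := ⟨(⟨q.2.1, q.2.2.trans q.1.2⟩, q.1), q.2.2⟩
  left_inv := by rintro ⟨⟨⟨i,hi⟩,⟨j,hj⟩⟩, h⟩; rfl
  right_inv := by rintro ⟨⟨j,hj⟩,⟨i,hi⟩⟩; rfl

lemma card_pairs (N : ℕ) : 2 * Nat.card {p : Fin N × Fin N // p.1 < p.2} + N = N * N := by
  rw [Nat.card_congr (pairSigmaEquiv N), Nat.card_eq_fintype_card, Fintype.card_sigma]
  simp only [Fintype.card_fin]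
  rw [show (∑ x : Fin N, (x:ℕ)) = ∑ i ∈ Finset.range N, i from
    Fin.sum_univ_eq_sum_range (fun i => i) N]
  have h := Finset.sum_range_id_mul_two N
  cases N with
  | zero => simp
  | succ M =>
    have : (∑ i ∈ Finset.range (M + 1), i) * 2 = (M+1) * M := h
    nlinarith [this]

lemma card_alt (N : ℕ) :
    Nat.card {T : Matrix (Fin N) (Fin N) (ZMod 2) // T.IsSymm ∧ ∀ i, T i i = 0} =
      2 ^ Nat.card {p : Fin N × Fin N // p.1 < p.2} := by
  rw [Nat.card_congr (altFunEquiv N), Nat.card_eq_fintype_card, Fintype.card_fun,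
    Nat.card_eq_fintype_card]
  rfl

/-! ### Basis extension -/

lemma exists_extend_basis {K V : Type*} [Field K] [AddCommGroup V] [Module K V]
    [FiniteDimensional K V] {d : ℕ} {w : Fin d → V} (hw : LinearIndependent K w) :
    ∃ b : Basis (Fin d ⊕ Fin (finrank K V - d)) K V, ∀ j, b (Sum.inl j) = w j := by
  classical
  have hw2 : LinearIndepOn K id (Set.range w) := (linearIndepOn_id_range_iff hw.injective).mpr hw
  set t := hw2.extend (Set.subset_univ _) with ht
  let B : Basis t K V := Basis.extend hw2
  have hsub : Set.range w ⊆ t := Basis.subset_extend hw2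
  let e1 : (Set.range w ⊕ ↥(t \ Set.range w)) ≃ t := Equiv.Set.sumDiffSubset hsub
  let b1 : Basis (Set.range w ⊕ ↥(t \ Set.range w)) K V := B.reindex e1.symm
  have hb1 : ∀ x : Set.range w, b1 (Sum.inl x) = ↑x := by
    intro x
    simp only [b1, Basis.reindex_apply, Equiv.symm_symm, e1,
      Equiv.Set.sumDiffSubset_apply_inl, B, Basis.extend_apply_self]
    exact Basis.extend_apply_self hw2 (Set.inclusion hsub x)
  haveI : Fintype t := FiniteDimensional.fintypeBasisIndex B
  haveI : Fintype (Set.range w) := Set.fintypeRange w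
  haveI : Fintype ↥(t \ Set.range w) := by
    apply Set.Finite.fintype
    exact (Set.toFinite t).subset Set.diff_subset
  have hcards : Fintype.card t = finrank K V := (Module.finrank_eq_card_basis B).symm
  have hcardw : Fintype.card (Set.range w) = d := by
    rw [Fintype.card_congr (Equiv.ofInjective w hw.injective).symm, Fintype.card_fin]
  have hcard3 : Fintype.card ↥(t \ Set.range w) = finrank K V - d := by
    have := Fintype.card_congr e1
    rw [Fintype.card_sum, hcardw, hcards] at this
    omega
  let e3 : ↥(t \ Set.range w) ≃ Fin (finrank K V - d) :=
    Fintype.equivFinOfCardEq hcard3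
  let e2 : Fin d ≃ Set.range w := Equiv.ofInjective w hw.injective
  refine ⟨b1.reindex (Equiv.sumCongr e2.symm e3), fun j => ?_⟩
  rw [Basis.reindex_apply]
  have : (Equiv.sumCongr e2.symm e3).symm (Sum.inl j) = Sum.inl (e2 j) := by simp
  rw [this, hb1]
  simp [e2]

/-! ### Change of basis matrices -/

section PQ
variable {K : Type*} [Field K] {κ ι : Type*} [Fintype κ] [DecidableEq κ]
  [Fintype ι] [DecidableEq ι] (b : Basis ι K (κ → K))

noncomputable def Pmat : Matrix κ ι K := Matrix.of fun i a => b a i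
noncomputable def Qmat : Matrix ι κ K := Matrix.of fun a i => b.repr (Pi.single i 1) a

lemma hPQ : Pmat b * Qmat b = 1 := by
  ext i i'
  rw [Matrix.mul_apply, Matrix.one_apply]
  have h := b.sum_repr (Pi.single i' (1 : K))
  have h2 := congrFun h i
  rw [Finset.sum_apply] at h2
  simp only [Pi.smul_apply, smul_eq_mul] at h2
  have h3 : ∑ a, Pmat b i a * Qmat b a i' = ∑ a, (b.repr (Pi.single i' 1)) a * b a i := by
    apply Finset.sum_congr rfl; intro a _
    show b a i * _ = _
    rw [mul_comm]; rfl
  rw [h3, h2, Pi.single_apply]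

lemma hQP : Qmat b * Pmat b = 1 := by
  ext a a'
  rw [Matrix.mul_apply, Matrix.one_apply]
  have hb : (b a' : κ → K) = ∑ i, (b a' i) • (Pi.single i 1 : κ → K) := by
    ext j
    rw [Finset.sum_apply]
    simp [Pi.single_apply, eq_comm]
  have h3 : ∑ i, Qmat b a i * Pmat b i a'
      = ∑ i, (b a' i) * (b.repr (Pi.single i 1 : κ → K)) a := by
    apply Finset.sum_congr rfl; intro i _
    show b.repr _ a * b a' i = _
    rw [mul_comm]
  rw [h3]
  have h4 : ∑ i, (b a' i) * (b.repr (Pi.single i 1 : κ → K)) a = (b.repr (b a')) a := by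
    conv_rhs => rw [hb]
    rw [map_sum, Finsupp.coe_finset_sum, Finset.sum_apply]
    apply Finset.sum_congr rfl
    intro i _
    rw [_root_.map_smul]
    simp
  rw [h4, b.repr_self]
  simp [Finsupp.single_apply, eq_comm]

end PQ

/-! ### Conjugation -/

section Conj
variable {κ ι : Type*} [Fintype κ] [Fintype ι] [DecidableEq κ] [DecidableEq ι]

lemma conj_conj (P : Matrix κ ι (ZMod 2)) (Q : Matrix ι κ (ZMod 2))
    (h : P * Q = 1) (T : Matrix κ κ (ZMod 2)) :
    Qᵀ * (Pᵀ * T * P) * Q = T := by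
  calc Qᵀ * (Pᵀ * T * P) * Q = (Qᵀ * Pᵀ) * T * (P * Q) := by
        simp only [Matrix.mul_assoc]
    _ = T := by rw [← Matrix.transpose_mul, h, Matrix.transpose_one, Matrix.one_mul,
        Matrix.mul_one]

lemma conj_apply (P : Matrix κ ι (ZMod 2)) (T : Matrix κ κ (ZMod 2)) (a a' : ι) :
    (Pᵀ * T * P) a a' = (fun i => P i a) ⬝ᵥ T.mulVec (fun i => P i a') := by
  simp only [Matrix.mul_apply, Matrix.transpose_apply, dotProduct, Matrix.mulVec,
    Finset.sum_mul, Finset.mul_sum]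
  rw [Finset.sum_comm]
  apply Finset.sum_congr rfl; intro i _
  apply Finset.sum_congr rfl; intro j _
  ring

lemma conj_alt (P : Matrix κ ι (ZMod 2)) (T : Matrix κ κ (ZMod 2))
    (hs : T.IsSymm) (hdg : ∀ i, T i i = 0) :
    (Pᵀ * T * P).IsSymm ∧ ∀ a, (Pᵀ * T * P) a a = 0 := by
  constructor
  · unfold Matrix.IsSymm
    calc (Pᵀ * T * P)ᵀ = Pᵀ * (Tᵀ * Pᵀᵀ) := by
          rw [Matrix.transpose_mul, Matrix.transpose_mul]
    _ = Pᵀ * T * P := by rw [hs, Matrix.transpose_transpose, Matrix.mul_assoc]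
  · intro a
    rw [conj_apply]
    exact quad_zero T hs hdg _

end Conj

end Alt2Aux

set_option maxHeartbeats 1000000 in
/-- For a uniformly random alternating `n × n` matrix `T` over `𝔽₂` and vectors
`v_1, …, v_m` spanning a subspace of dimension `d`, the probability that `T vᵢ = 0`
for all `i` equals `2^{−nd + d(d+1)/2}`. -/
theorem stmt_4 (n m d : ℕ) (hn : 1 ≤ n) (v : Fin m → (Fin n → ZMod 2))
    (hd : Module.finrank (ZMod 2) (Submodule.span (ZMod 2) (Set.range v)) = d) :
    (Nat.card {T : Matrix (Fin n) (Fin n) (ZMod 2) //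
        IsAlt2 T ∧ ∀ i, T.mulVec (v i) = 0} : ℝ) /
      (Nat.card {T : Matrix (Fin n) (Fin n) (ZMod 2) // IsAlt2 T} : ℝ) =
    (2 : ℝ) ^ (((d * (d + 1) / 2 : ℕ) : ℤ) - ((n * d : ℕ) : ℤ)) := by
  classical
  open Matrix Finset Module Alt2Aux in
  set W : Submodule (ZMod 2) (Fin n → ZMod 2) := Submodule.span (ZMod 2) (Set.range v) with hW
  -- d ≤ n
  have hfr : finrank (ZMod 2) (Fin n → ZMod 2) = n := Module.finrank_fin_fun (ZMod 2)
  have hdn : d ≤ n := by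
    have h1 := Submodule.finrank_le W
    rw [hfr] at h1
    omega
  set k := n - d with hk
  have hnk : n = d + k := by omega
  -- basis of W
  let bW : Basis (Fin d) (ZMod 2) W := (Module.finBasis (ZMod 2) W).reindex (finCongr hd)
  let w : Fin d → (Fin n → ZMod 2) := ⇑W.subtype ∘ ⇑bW
  have hw : LinearIndependent (ZMod 2) w := by
    have := bW.linearIndependent
    exact this.map' W.subtype (Submodule.ker_subtype W)
  have hspanw : Submodule.span (ZMod 2) (Set.range w) = W := by
    have h1 : Set.range w = W.subtype '' Set.range bW := by
      rw [← Set.range_comp]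
    rw [h1, ← Submodule.map_span, bW.span_eq, Submodule.map_top, Submodule.range_subtype]
  -- condition equivalence
  have hker : ∀ T : Matrix (Fin n) (Fin n) (ZMod 2),
      (∀ i, T.mulVec (v i) = 0) ↔ (∀ j, T.mulVec (w j) = 0) := by
    intro T
    have key : ∀ {α : Type} (u : α → (Fin n → ZMod 2)),
        Submodule.span (ZMod 2) (Set.range u) = W →
        ((∀ i, T.mulVec (u i) = 0) ↔ W ≤ LinearMap.ker T.mulVecLin) := by
      intro α u hu
      rw [← hu, Submodule.span_le]
      constructor
      · intro h x hx
        obtain ⟨i, rfl⟩ := hx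
        simp [LinearMap.mem_ker, Matrix.mulVecLin_apply, h i]
      · intro h i
        have := h ⟨i, rfl⟩
        simpa [LinearMap.mem_ker, Matrix.mulVecLin_apply] using this
    rw [key v rfl, key w hspanw]
  -- extended basis
  obtain ⟨b, hb⟩ : ∃ b : Basis (Fin d ⊕ Fin k) (ZMod 2) (Fin n → ZMod 2), ∀ j, b (Sum.inl j) = w j := by
    have := Alt2Aux.exists_extend_basis hw
    rw [hfr] at this
    exact this
  -- conjugation
  set P : Matrix (Fin n) (Fin d ⊕ Fin k) (ZMod 2) := Alt2Aux.Pmat b with hP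
  set Q : Matrix (Fin d ⊕ Fin k) (Fin n) (ZMod 2) := Alt2Aux.Qmat b with hQ
  have hpq : P * Q = 1 := Alt2Aux.hPQ b
  have hqp : Q * P = 1 := Alt2Aux.hQP b
  have hcolP : ∀ a, (fun i => P i a) = b a := fun a => rfl
  let C : Matrix (Fin n) (Fin n) (ZMod 2) ≃
      Matrix (Fin d ⊕ Fin k) (Fin d ⊕ Fin k) (ZMod 2) :=
    { toFun := fun T => Pᵀ * T * P
      invFun := fun M => Qᵀ * M * Q
      left_inv := fun T => Alt2Aux.conj_conj P Q hpq T
      right_inv := fun M => Alt2Aux.conj_conj Q P hqp M }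
  have hiff : ∀ T : Matrix (Fin n) (Fin n) (ZMod 2),
      (IsAlt2 T ∧ ∀ i, T.mulVec (v i) = 0) ↔
      ((C T).IsSymm ∧ (∀ a, (C T) a a = 0) ∧ ∀ (j : Fin d) a, (C T) a (Sum.inl j) = 0) := by
    intro T
    show (IsAlt2 T ∧ _) ↔ ((Pᵀ * T * P).IsSymm ∧ (∀ a, (Pᵀ * T * P) a a = 0) ∧
      ∀ (j : Fin d) a, (Pᵀ * T * P) a (Sum.inl j) = 0)
    constructor
    · rintro ⟨⟨hs, hdg⟩, hcond⟩
      rw [hker] at hcond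
      obtain ⟨hs', hdg'⟩ := Alt2Aux.conj_alt P T hs hdg
      refine ⟨hs', hdg', fun j a => ?_⟩
      rw [Alt2Aux.conj_apply]
      rw [show (fun i => P i (Sum.inl j)) = w j by rw [hcolP, hb]]
      rw [hcond j, dotProduct_zero]
    · rintro ⟨hs', hdg', hcol'⟩
      have hT : T = Qᵀ * (Pᵀ * T * P) * Q := (Alt2Aux.conj_conj P Q hpq T).symm
      obtain ⟨hs2, hdg2⟩ := Alt2Aux.conj_alt Q (Pᵀ * T * P) hs' hdg'
      constructor
      · constructor
        · rw [hT]; exact hs2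
        · intro i; rw [hT]; exact hdg2 i
      · rw [hker]
        intro j
        have hwj : w j = P.mulVec (Pi.single (Sum.inl j) 1) := by
          rw [Matrix.mulVec_single_one]
          rw [← hb j]
          rfl
        have hassoc : Qᵀ * (Pᵀ * T * P) * Q * P = Qᵀ * (Pᵀ * T * P) := by
          rw [Matrix.mul_assoc (Qᵀ * (Pᵀ * T * P)) Q P, hqp, Matrix.mul_one]
        have hcolz : (Pᵀ * T * P).mulVec (Pi.single (Sum.inl j) 1) = 0 := by
          rw [Matrix.mulVec_single_one]
          ext a
          exact hcol' j a
        rw [hT, hwj, Matrix.mulVec_mulVec, hassoc, ← Matrix.mulVec_mulVec, hcolz,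
          Matrix.mulVec_zero]
  -- block reduction
  let E2 : {M : Matrix (Fin d ⊕ Fin k) (Fin d ⊕ Fin k) (ZMod 2) //
        M.IsSymm ∧ (∀ a, M a a = 0) ∧ ∀ (j : Fin d) a, M a (Sum.inl j) = 0} ≃
      {S : Matrix (Fin k) (Fin k) (ZMod 2) // S.IsSymm ∧ ∀ i, S i i = 0} :=
    { toFun := fun M => ⟨M.1.submatrix Sum.inr Sum.inr, by
        constructor
        · ext p q
          exact M.2.1.apply (Sum.inr p) (Sum.inr q)
        · intro i; exact M.2.2.1 (Sum.inr i)⟩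
      invFun := fun S => ⟨Matrix.fromBlocks 0 0 0 S.1, by
        refine ⟨?_, ?_, ?_⟩
        · unfold Matrix.IsSymm
          rw [Matrix.fromBlocks_transpose, S.2.1]
          simp
        · rintro (a | a) <;> simp [S.2.2 _]
        · rintro j (a | a) <;> simp⟩
      left_inv := by
        rintro ⟨M, hs, hdg, hcol⟩
        ext (a | a) (c | c)
        · simpa using (hcol c (Sum.inl a)).symm
        · have h1 : M (Sum.inl a) (Sum.inr c) = M (Sum.inr c) (Sum.inl a) :=
            hs.apply (Sum.inr c) (Sum.inl a)
          simpa [h1] using (hcol a (Sum.inr c)).symm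
        · simpa using (hcol c (Sum.inr a)).symm
        · simp
      right_inv := by
        rintro ⟨S, hs, hdg⟩
        ext p q
        simp [Matrix.fromBlocks] }
  -- cardinalities
  set Bk := Nat.card {p : Fin k × Fin k // p.1 < p.2} with hBk
  set Bn := Nat.card {p : Fin n × Fin n // p.1 < p.2} with hBn
  have hnum : Nat.card {T : Matrix (Fin n) (Fin n) (ZMod 2) //
      IsAlt2 T ∧ ∀ i, T.mulVec (v i) = 0} = 2 ^ Bk := by
    rw [Nat.card_congr (Equiv.subtypeEquiv
      (p := fun T : Matrix (Fin n) (Fin n) (ZMod 2) =>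
        IsAlt2 T ∧ ∀ i, T.mulVec (v i) = 0)
      (q := fun M : Matrix (Fin d ⊕ Fin k) (Fin d ⊕ Fin k) (ZMod 2) =>
        M.IsSymm ∧ (∀ a, M a a = 0) ∧ ∀ (j : Fin d) a, M a (Sum.inl j) = 0)
      C hiff), Nat.card_congr E2]
    exact Alt2Aux.card_alt k
  have hden : Nat.card {T : Matrix (Fin n) (Fin n) (ZMod 2) // IsAlt2 T} = 2 ^ Bn := by
    exact Alt2Aux.card_alt n
  rw [hnum, hden]
  -- arithmetic
  have e1 : 2 * Bk + k = k * k := Alt2Aux.card_pairs k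
  have e2 : 2 * Bn + n = n * n := Alt2Aux.card_pairs n
  have e3 : 2 * (d * (d + 1) / 2) = d * (d + 1) :=
    Nat.mul_div_cancel' (Nat.even_mul_succ_self d).two_dvd
  have hexp : ((Bk : ℤ) - (Bn : ℤ)) = ((d * (d + 1) / 2 : ℕ) : ℤ) - ((n * d : ℕ) : ℤ) := by
    have e1' : 2 * (Bk : ℤ) + k = k * k := by exact_mod_cast e1
    have e2' : 2 * (Bn : ℤ) + n = n * n := by exact_mod_cast e2
    have e3' : 2 * ((d * (d + 1) / 2 : ℕ) : ℤ) = d * (d + 1) := by exact_mod_cast e3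
    have e4' : (n : ℤ) = d + k := by exact_mod_cast hnk
    have key : 2 * ((Bk : ℤ) - (Bn : ℤ)) =
        2 * (((d * (d + 1) / 2 : ℕ) : ℤ) - ((n * d : ℕ) : ℤ)) := by
      rw [e4'] at e2'
      rw [Nat.cast_mul, e4']
      linear_combination e1' - e2' - e3'
    linarith
  rw [← hexp]
  rw [zpow_sub₀ (two_ne_zero), zpow_natCast, zpow_natCast]
  push_cast
  ring
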